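/- Let F be a free group of rank 2 with basis {a,b} and let H be the subgroup generated by a and the elements b^k a^k b a b^{-k} for k ≥ 1. Then b ∉ H, hence H is a proper subgroup of F. -/

import Mathlib

private abbrev XX : Type := ℤ ⊕ ℕ × ℕ

private def afun : XX → XX
  | .inl n => if n < 0 then .inr ((-n).toNat, 0) else .inl n
  | .inr (k, i) => if i + 1 < k then .inr (k, i + 1)
      else if i + 1 = k then .inl (-(k : ℤ)) else .inr (k, i)

private def ainv : XX → XX
  | .inl n => if n < 0 then .inr ((-n).toNat, (-n).toNat - 1) else .inl n
  | .inr (k, i) => if i = 0 then (if 1 ≤ k then .inl (-(k : ℤ)) else .inr (k, i))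
      else if i < k then .inr (k, i - 1) else .inr (k, i)

private lemma afun_inl (n : ℤ) :
    afun (.inl n) = if n < 0 then .inr ((-n).toNat, 0) else .inl n := rfl
private lemma afun_inr (k i : ℕ) :
    afun (.inr (k, i)) = if i + 1 < k then .inr (k, i + 1)
      else if i + 1 = k then .inl (-(k : ℤ)) else .inr (k, i) := rfl
private lemma ainv_inl (n : ℤ) :
    ainv (.inl n) = if n < 0 then .inr ((-n).toNat, (-n).toNat - 1) else .inl n := rfl
private lemma ainv_inr (k i : ℕ) :
    ainv (.inr (k, i)) = if i = 0 then (if 1 ≤ k then .inl (-(k : ℤ)) else .inr (k, i))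
      else if i < k then .inr (k, i - 1) else .inr (k, i) := rfl

private def aperm : Equiv.Perm XX where
  toFun := afun
  invFun := ainv
  left_inv := by
    rintro (n | ⟨k, i⟩)
    · rw [afun_inl]
      by_cases h : n < 0
      · rw [if_pos h, ainv_inr, if_pos rfl, if_pos (by omega)]
        simp only [Sum.inl.injEq]
        omega
      · rw [if_neg h, ainv_inl, if_neg h]
    · rw [afun_inr]
      by_cases h1 : i + 1 < k
      · rw [if_pos h1, ainv_inr, if_neg (by omega), if_pos (by omega)]
        simp
      · rw [if_neg h1]
        by_cases h2 : i + 1 = k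
        · rw [if_pos h2, ainv_inl, if_pos (by omega : -(k:ℤ) < 0)]
          simp only [Sum.inr.injEq, Prod.mk.injEq, true_and, and_true, eq_self_iff_true]
          omega
        · rw [if_neg h2, ainv_inr]
          by_cases h3 : i = 0
          · rw [if_pos h3, if_neg (by omega)]
          · rw [if_neg h3, if_neg (by omega)]
  right_inv := by
    rintro (n | ⟨k, i⟩)
    · rw [ainv_inl]
      by_cases h : n < 0
      · rw [if_pos h, afun_inr, if_neg (by omega), if_pos (by omega)]
        simp only [Sum.inl.injEq]
        omega
      · rw [if_neg h, afun_inl, if_neg h]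
    · rw [ainv_inr]
      by_cases h3 : i = 0
      · rw [if_pos h3]
        by_cases hk : 1 ≤ k
        · rw [if_pos hk, afun_inl, if_pos (by omega : -(k:ℤ) < 0)]
          simp only [Sum.inr.injEq, Prod.mk.injEq, true_and, and_true, eq_self_iff_true]
          omega
        · rw [if_neg hk, afun_inr, if_neg (by omega), if_neg (by omega)]
      · rw [if_neg h3]
        by_cases h4 : i < k
        · rw [if_pos h4, afun_inr, if_pos (show i - 1 + 1 < k by omega)]
          simp only [Sum.inr.injEq, Prod.mk.injEq, true_and, and_true, eq_self_iff_true]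
          omega
        · rw [if_neg h4, afun_inr, if_neg (by omega), if_neg (by omega)]

private lemma aperm_apply (x : XX) : aperm x = afun x := rfl

private def bperm : Equiv.Perm XX := Equiv.sumCongr (Equiv.addRight (1 : ℤ)) (Equiv.refl _)

private lemma bperm_inl (n : ℤ) : bperm (.inl n) = .inl (n + 1) := rfl
private lemma bperm_inr (p : ℕ × ℕ) : bperm (.inr p) = .inr p := rfl

private lemma bpow_inl (m : ℕ) (n : ℤ) : (bperm ^ m) (.inl n) = .inl (n + m) := by
  induction m generalizing n with
  | zero => simp
  | succ j ih =>
    rw [pow_succ', Equiv.Perm.mul_apply, ih, bperm_inl]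
    congr 1
    push_cast
    ring

private lemma bpow_inv_inl (m : ℕ) (n : ℤ) :
    ((bperm ^ m)⁻¹) (Sum.inl n : XX) = .inl (n - m) := by
  have h : (bperm ^ m) (Sum.inl (n - m) : XX) = .inl n := by
    rw [bpow_inl]; congr 1; ring
  rw [← h, ← Equiv.Perm.mul_apply, inv_mul_cancel, Equiv.Perm.one_apply]

private lemma aperm_inl_zero : aperm (Sum.inl 0 : XX) = Sum.inl 0 := by
  rw [aperm_apply, afun_inl, if_neg (by omega)]

private lemma aperm_inl_neg (k : ℕ) (hk : 1 ≤ k) :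
    aperm (Sum.inl (-(k : ℤ)) : XX) = .inr (k, 0) := by
  rw [aperm_apply, afun_inl, if_pos (by omega : -(k:ℤ) < 0)]
  simp only [Sum.inr.injEq, Prod.mk.injEq, and_true]
  omega

private lemma aperm_chain (k i : ℕ) (h : i + 1 < k) :
    aperm (Sum.inr (k, i) : XX) = .inr (k, i + 1) := by
  rw [aperm_apply, afun_inr, if_pos h]

private lemma aperm_last (k : ℕ) (hk : 1 ≤ k) :
    aperm (Sum.inr (k, k - 1) : XX) = .inl (-(k : ℤ)) := by
  rw [aperm_apply, afun_inr, if_neg (by omega), if_pos (by omega)]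

private lemma apow_chain (k : ℕ) : ∀ j, j < k → (aperm ^ j) (Sum.inr (k, 0) : XX) = .inr (k, j) := by
  intro j
  induction j with
  | zero => intro _; simp
  | succ i ih =>
    intro h
    rw [pow_succ', Equiv.Perm.mul_apply, ih (by omega), aperm_chain k i h]

private lemma apow_cycle (k : ℕ) (hk : 1 ≤ k) :
    (aperm ^ k) (Sum.inr (k, 0) : XX) = .inl (-(k : ℤ)) := by
  obtain ⟨m, rfl⟩ : ∃ m, k = m + 1 := ⟨k - 1, by omega⟩
  rw [pow_succ', Equiv.Perm.mul_apply, apow_chain (m + 1) m (by omega)]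
  have h := aperm_last (m + 1) (by omega)
  simpa using h

/-- In the free group `F` on `{a, b}`, the subgroup
`H = ⟨a, bᵏaᵏbab⁻ᵏ (k ≥ 1)⟩` does not contain `b`; hence `H` is proper. -/
theorem b_not_mem_subgroup_example
    (a b : FreeGroup (Fin 2)) (ha : a = FreeGroup.of 0) (hb : b = FreeGroup.of 1)
    (H : Subgroup (FreeGroup (Fin 2)))
    (hH : H = Subgroup.closure
      ({a} ∪ {x | ∃ k : ℕ, 1 ≤ k ∧ x = b ^ k * a ^ k * b * a * (b ^ k)⁻¹})) :
    b ∉ H ∧ H ≠ ⊤ := by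
  set φ : FreeGroup (Fin 2) →* Equiv.Perm XX := FreeGroup.lift ![aperm, bperm] with hφ
  have hφa : φ a = aperm := by rw [ha, hφ]; simp
  have hφb : φ b = bperm := by rw [hb, hφ]; simp
  set K : Subgroup (FreeGroup (Fin 2)) :=
    (MulAction.stabilizer (Equiv.Perm XX) (Sum.inl 0 : XX)).comap φ with hK
  have hle : H ≤ K := by
    rw [hH]
    refine (Subgroup.closure_le _).mpr ?_
    intro x hx
    rcases hx with h | ⟨k, hk, rfl⟩
    · rw [Set.mem_singleton_iff] at h
      rw [h]
      show φ a ∈ MulAction.stabilizer (Equiv.Perm XX) (Sum.inl 0 : XX)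
      rw [MulAction.mem_stabilizer_iff, hφa]
      exact aperm_inl_zero
    · show φ _ ∈ MulAction.stabilizer (Equiv.Perm XX) (Sum.inl 0 : XX)
      rw [MulAction.mem_stabilizer_iff]
      simp only [map_mul, map_pow, map_inv, hφa, hφb]
      show (bperm ^ k * aperm ^ k * bperm * aperm * (bperm ^ k)⁻¹) (Sum.inl 0 : XX) = Sum.inl 0
      simp only [Equiv.Perm.mul_apply]
      rw [bpow_inv_inl k 0, (by ring : (0 : ℤ) - k = -(k : ℤ)), aperm_inl_neg k hk,
        bperm_inr, apow_cycle k hk, bpow_inl]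
      congr 1
      ring
  have hbK : b ∉ K := by
    intro hmem
    have h2 : φ b (Sum.inl 0 : XX) = Sum.inl 0 := hmem
    rw [hφb, bperm_inl] at h2
    simp at h2
  exact ⟨fun h => hbK (hle h), fun h => hbK (hle (h ▸ Subgroup.mem_top b))⟩
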